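/- Let B, K, N, F be positive integers and let U ∈ ℝ^{B×N}, P ∈ ℝ^{K×N}, G ∈ ℝ^{B×K}, R ∈ ℝ^{K×N} have all entries strictly positive. Define the (block of the) cost function J̃(G, R) = Σ_{n=1}^N Σ_{k=1}^K ( P_{kn}/R_{kn} + F·log R_{kn} ) + Σ_{n=1}^N Σ_{b=1}^B ( F·log((GR)_{bn}) + U_{bn}/(2·(GR)_{bn}) ). Define the updated matrix G⁺ entrywise by G⁺_{bk} = G_{bk} · sqrt( [ ((1/(2F))·U ⊙ (GR)^{⊙(−2)}) Rᵀ ]_{bk} / [ (GR)^{⊙(−1)} Rᵀ ]_{bk} ), where ⊙ denotes entrywise (Hadamard) operations and dotted exponents are entrywise powers. Then J̃(G⁺, R) ≤ J̃(G, R). -/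

import Mathlib

open Finset Matrix

lemma aux_log {x y : ℝ} (hx : 0 < x) (hy : 0 < y) :
    Real.log y - Real.log x ≤ (y - x) / x := by
  rw [← Real.log_div hy.ne' hx.ne']
  have h := Real.log_le_sub_one_of_pos (div_pos hy hx)
  have h2 : y / x - 1 = (y - x) / x := by field_simp
  linarith

lemma aux_amgm {a c x : ℝ} (ha : 0 < a) (hc : 0 < c) (hx : 0 < x) :
    a * Real.sqrt (c / a) + c / Real.sqrt (c / a) ≤ a * x + c / x := by
  have htpos : 0 < Real.sqrt (c / a) := Real.sqrt_pos.2 (div_pos hc ha)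
  have ht2 : Real.sqrt (c / a) ^ 2 = c / a := Real.sq_sqrt (div_pos hc ha).le
  set t := Real.sqrt (c / a) with hts
  have hc' : c = a * t ^ 2 := by rw [ht2]; field_simp
  have h1 : c / t = a * t := by rw [hc']; field_simp
  rw [h1, hc']
  have key : a * x + a * t ^ 2 / x - (a * t + a * t) = a * (x - t) ^ 2 / x := by
    field_simp; ring
  nlinarith [div_nonneg (mul_nonneg ha.le (sq_nonneg (x - t))) hx.le]


/-- The block of the joint IVA–NMF cost function that depends on `G` and `R`:
`J̃(G,R) = Σₙ Σₖ (P_{kn}/R_{kn} + F·log R_{kn})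
        + Σₙ Σ_b (F·log((GR)_{bn}) + U_{bn}/(2(GR)_{bn}))`. -/
noncomputable def Jtilde (B K N F : ℕ) (U : Matrix (Fin B) (Fin N) ℝ)
    (P : Matrix (Fin K) (Fin N) ℝ) (G : Matrix (Fin B) (Fin K) ℝ)
    (R : Matrix (Fin K) (Fin N) ℝ) : ℝ :=
  (∑ n, ∑ k, (P k n / R k n + (F : ℝ) * Real.log (R k n))) +
  (∑ n, ∑ b, ((F : ℝ) * Real.log ((G * R) b n) + U b n / (2 * (G * R) b n)))

/-- Multiplicative update of the gain matrix `G` decreases the cost `J̃`. -/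
theorem gain_update_decreases_cost
    (B K N F : ℕ) (hB : 0 < B) (hK : 0 < K) (hN : 0 < N) (hF : 0 < F)
    (U : Matrix (Fin B) (Fin N) ℝ) (P : Matrix (Fin K) (Fin N) ℝ)
    (G : Matrix (Fin B) (Fin K) ℝ) (R : Matrix (Fin K) (Fin N) ℝ)
    (hU : ∀ b n, 0 < U b n) (hP : ∀ k n, 0 < P k n)
    (hG : ∀ b k, 0 < G b k) (hR : ∀ k n, 0 < R k n)
    (Gplus : Matrix (Fin B) (Fin K) ℝ)
    (hGplus : ∀ b k, Gplus b k = G b k * Real.sqrt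
      ((((Matrix.of fun (b : Fin B) (n : Fin N) => (1 / (2 * (F : ℝ))) * U b n * ((G * R) b n)⁻¹ ^ 2) * Rᵀ :
          Matrix (Fin B) (Fin K) ℝ) b k) /
       (((Matrix.of fun (b : Fin B) (n : Fin N) => ((G * R) b n)⁻¹) * Rᵀ :
          Matrix (Fin B) (Fin K) ℝ) b k))) :
    Jtilde B K N F U P Gplus R ≤ Jtilde B K N F U P G R := by
  classical
  haveI : Nonempty (Fin K) := Fin.pos_iff_nonempty.1 hK
  haveI : Nonempty (Fin N) := Fin.pos_iff_nonempty.1 hN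
  have hFR : (0:ℝ) < F := Nat.cast_pos.2 hF
  have hx : ∀ b n, 0 < (G * R) b n := fun b n => by
    rw [Matrix.mul_apply]
    exact Finset.sum_pos (fun k _ => mul_pos (hG b k) (hR k n)) Finset.univ_nonempty
  -- Num and Den positivity
  have hNumPos : ∀ b k, 0 <
      (((Matrix.of fun (b : Fin B) (n : Fin N) => (1 / (2 * (F : ℝ))) * U b n * ((G * R) b n)⁻¹ ^ 2) * Rᵀ :
        Matrix (Fin B) (Fin K) ℝ)) b k := by
    intro b k
    rw [Matrix.mul_apply]
    refine Finset.sum_pos (fun n _ => ?_) Finset.univ_nonempty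
    simp only [Matrix.of_apply, Matrix.transpose_apply]
    have hf : 0 < 1 / (2 * (F : ℝ)) := by positivity
    exact mul_pos (mul_pos (mul_pos hf (hU b n)) (pow_pos (inv_pos.2 (hx b n)) 2)) (hR k n)
  have hDenPos : ∀ b k, 0 <
      (((Matrix.of fun (b : Fin B) (n : Fin N) => ((G * R) b n)⁻¹) * Rᵀ :
        Matrix (Fin B) (Fin K) ℝ)) b k := by
    intro b k
    rw [Matrix.mul_apply]
    refine Finset.sum_pos (fun n _ => ?_) Finset.univ_nonempty
    simp only [Matrix.of_apply, Matrix.transpose_apply]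
    exact mul_pos (inv_pos.2 (hx b n)) (hR k n)
  have hGp : ∀ b k, 0 < Gplus b k := fun b k => by
    rw [hGplus]
    exact mul_pos (hG b k) (Real.sqrt_pos.2 (div_pos (hNumPos b k) (hDenPos b k)))
  have hxp : ∀ b n, 0 < (Gplus * R) b n := fun b n => by
    rw [Matrix.mul_apply]
    exact Finset.sum_pos (fun k _ => mul_pos (hGp b k) (hR k n)) Finset.univ_nonempty
  -- A and C
  set A : Fin B → Fin K → ℝ := fun b k => ∑ n, R k n / (G * R) b n with hAdef
  set C : Fin B → Fin K → ℝ :=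
    fun b k => ∑ n, U b n / 2 * (G b k) ^ 2 * R k n / ((G * R) b n) ^ 2 with hCdef
  have hApos : ∀ b k, 0 < A b k := fun b k =>
    Finset.sum_pos (fun n _ => div_pos (hR k n) (hx b n)) Finset.univ_nonempty
  have hCpos : ∀ b k, 0 < C b k := fun b k =>
    Finset.sum_pos (fun n _ =>
      div_pos (mul_pos (mul_pos (half_pos (hU b n)) (pow_pos (hG b k) 2)) (hR k n))
        (pow_pos (hx b n) 2)) Finset.univ_nonempty
  -- the update is the minimizer of the per-(b,k) auxiliary function
  have hmin : ∀ b k, Gplus b k = Real.sqrt (C b k / ((F : ℝ) * A b k)) := by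
    intro b k
    rw [hGplus]
    have h1 : C b k = (F : ℝ) * (G b k) ^ 2 *
        (((Matrix.of fun (b : Fin B) (n : Fin N) => (1 / (2 * (F : ℝ))) * U b n * ((G * R) b n)⁻¹ ^ 2) * Rᵀ :
          Matrix (Fin B) (Fin K) ℝ)) b k := by
      rw [Matrix.mul_apply, Finset.mul_sum, hCdef]
      refine Finset.sum_congr rfl fun n _ => ?_
      simp only [Matrix.of_apply, Matrix.transpose_apply]
      have hxne := (hx b n).ne'
      field_simp
    have h2 : A b k =
        (((Matrix.of fun (b : Fin B) (n : Fin N) => ((G * R) b n)⁻¹) * Rᵀ :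
          Matrix (Fin B) (Fin K) ℝ)) b k := by
      rw [Matrix.mul_apply, hAdef]
      refine Finset.sum_congr rfl fun n _ => ?_
      simp only [Matrix.of_apply, Matrix.transpose_apply]
      rw [div_eq_mul_inv, mul_comm]
    rw [h1, h2]
    rw [show ((F : ℝ) * (G b k) ^ 2 *
        (((Matrix.of fun (b : Fin B) (n : Fin N) => (1 / (2 * (F : ℝ))) * U b n * ((G * R) b n)⁻¹ ^ 2) * Rᵀ :
          Matrix (Fin B) (Fin K) ℝ)) b k) /
        ((F : ℝ) * (((Matrix.of fun (b : Fin B) (n : Fin N) => ((G * R) b n)⁻¹) * Rᵀ :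
          Matrix (Fin B) (Fin K) ℝ)) b k)
        = (G b k) ^ 2 *
          ((((Matrix.of fun (b : Fin B) (n : Fin N) => (1 / (2 * (F : ℝ))) * U b n * ((G * R) b n)⁻¹ ^ 2) * Rᵀ :
            Matrix (Fin B) (Fin K) ℝ)) b k /
           (((Matrix.of fun (b : Fin B) (n : Fin N) => ((G * R) b n)⁻¹) * Rᵀ :
            Matrix (Fin B) (Fin K) ℝ)) b k) from by
      have habs : ∀ (f g2 x y : ℝ), f ≠ 0 → y ≠ 0 → f * g2 * x / (f * y) = g2 * (x / y) := by
        intros f g2 x y hf hy; field_simp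
      exact habs _ _ _ _ hFR.ne' (hDenPos b k).ne']
    rw [Real.sqrt_mul (sq_nonneg _), Real.sqrt_sq (hG b k).le]
  -- per-(b,k) key inequality (AM-GM at the minimizer)
  have key : ∀ b k, (F:ℝ) * A b k * Gplus b k + C b k * (Gplus b k)⁻¹
      ≤ (F:ℝ) * A b k * G b k + C b k * (G b k)⁻¹ := by
    intro b k
    have ham := aux_amgm (mul_pos hFR (hApos b k)) (hCpos b k) (hG b k)
    rw [← hmin b k] at ham
    simpa [div_eq_mul_inv] using ham
  have step3 : ∑ b, ∑ k, ((F:ℝ) * A b k * (Gplus b k - G b k)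
      + C b k * ((Gplus b k)⁻¹ - (G b k)⁻¹)) ≤ 0 := by
    refine Finset.sum_nonpos fun b _ => Finset.sum_nonpos fun k _ => ?_
    nlinarith [key b k]
  -- the majorization bound
  have step1 : Jtilde B K N F U P Gplus R - Jtilde B K N F U P G R ≤
      ∑ n, ∑ b, ∑ k, ((F:ℝ) * (R k n / ((G * R) b n)) * (Gplus b k - G b k)
        + (U b n / 2 * (G b k) ^ 2 * R k n / ((G * R) b n) ^ 2)
          * ((Gplus b k)⁻¹ - (G b k)⁻¹)) := by
    have hdiff : Jtilde B K N F U P Gplus R - Jtilde B K N F U P G R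
        = ∑ n, ∑ b, (((F:ℝ) * Real.log ((Gplus * R) b n) + U b n / (2 * (Gplus * R) b n))
          - ((F:ℝ) * Real.log ((G * R) b n) + U b n / (2 * (G * R) b n))) := by
      unfold Jtilde
      have e : ∀ S Y Z : ℝ, S + Y - (S + Z) = Y - Z := fun _ _ _ => by ring
      rw [e, ← Finset.sum_sub_distrib]
      exact Finset.sum_congr rfl fun n _ => (Finset.sum_sub_distrib _ _).symm
    rw [hdiff]
    refine Finset.sum_le_sum fun n _ => Finset.sum_le_sum fun b _ => ?_
    have hx0 := hx b n
    have hxp0 := hxp b n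
    have hxe : (G * R) b n = ∑ k, G b k * R k n := Matrix.mul_apply
    have hxpe : (Gplus * R) b n = ∑ k, Gplus b k * R k n := Matrix.mul_apply
    have h1 := aux_log hx0 hxp0
    have hsum1 : ∑ k, G b k * R k n / ((G * R) b n) = 1 := by
      rw [← Finset.sum_div, ← hxe, div_self hx0.ne']
    have hjen := Finset.sq_sum_div_le_sum_sq_div Finset.univ
        (fun k => G b k * R k n / ((G * R) b n))
        (g := fun k => Gplus b k * R k n) (fun k _ => mul_pos (hGp b k) (hR k n))
    rw [hsum1, one_pow, ← hxpe] at hjen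
    have h2 : 1 / ((Gplus * R) b n)
        ≤ ∑ k, (G b k) ^ 2 * R k n / (((G * R) b n) ^ 2 * Gplus b k) := by
      refine hjen.trans_eq (Finset.sum_congr rfl fun k _ => ?_)
      field_simp [(hR k n).ne', (hGp b k).ne', hx0.ne']
    have h3 : 1 / ((G * R) b n)
        = ∑ k, (G b k) ^ 2 * R k n / (((G * R) b n) ^ 2 * G b k) := by
      have hh : ∑ k, (G b k) ^ 2 * R k n / (((G * R) b n) ^ 2 * G b k)
          = (∑ k, G b k * R k n) / ((G * R) b n) ^ 2 := by
        rw [Finset.sum_div]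
        refine Finset.sum_congr rfl fun k _ => ?_
        field_simp [(hG b k).ne']
      rw [hh, ← hxe, sq]
      field_simp
    have h4 : ∑ k, (F:ℝ) * (R k n / ((G * R) b n)) * (Gplus b k - G b k)
        = (F:ℝ) * (((Gplus * R) b n - (G * R) b n) / ((G * R) b n)) := by
      have hd : (Gplus * R) b n - (G * R) b n = ∑ k, (Gplus b k - G b k) * R k n := by
        rw [hxpe, hxe, ← Finset.sum_sub_distrib]
        exact Finset.sum_congr rfl fun k _ => by ring
      rw [hd, Finset.sum_div, Finset.mul_sum]
      exact Finset.sum_congr rfl fun k _ => by ring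
    have h5 : ∑ k, (U b n / 2 * (G b k) ^ 2 * R k n / ((G * R) b n) ^ 2)
          * ((Gplus b k)⁻¹ - (G b k)⁻¹)
        = U b n / 2 * (∑ k, (G b k) ^ 2 * R k n / (((G * R) b n) ^ 2 * Gplus b k))
          - U b n / 2 * (∑ k, (G b k) ^ 2 * R k n / (((G * R) b n) ^ 2 * G b k)) := by
      rw [← mul_sub, ← Finset.sum_sub_distrib, Finset.mul_sum]
      refine Finset.sum_congr rfl fun k _ => ?_
      field_simp [(hR k n).ne', (hGp b k).ne', (hG b k).ne', hx0.ne']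
    rw [Finset.sum_add_distrib, h4, h5]
    have e1 : (F:ℝ) * Real.log ((Gplus * R) b n) - (F:ℝ) * Real.log ((G * R) b n)
        ≤ (F:ℝ) * (((Gplus * R) b n - (G * R) b n) / ((G * R) b n)) := by
      have hr : (F:ℝ) * Real.log ((Gplus * R) b n) - (F:ℝ) * Real.log ((G * R) b n)
          = (F:ℝ) * (Real.log ((Gplus * R) b n) - Real.log ((G * R) b n)) := by ring
      rw [hr]
      exact mul_le_mul_of_nonneg_left h1 hFR.le
    have e2 : U b n / 2 * (1 / ((Gplus * R) b n))
        ≤ U b n / 2 * (∑ k, (G b k) ^ 2 * R k n / (((G * R) b n) ^ 2 * Gplus b k)) :=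
      mul_le_mul_of_nonneg_left h2 (half_pos (hU b n)).le
    have e3 : U b n / 2 * (1 / ((G * R) b n))
        = U b n / 2 * (∑ k, (G b k) ^ 2 * R k n / (((G * R) b n) ^ 2 * G b k)) := by
      rw [h3]
    have r1 : U b n / (2 * (Gplus * R) b n) = U b n / 2 * (1 / ((Gplus * R) b n)) := by
      ring
    have r2 : U b n / (2 * (G * R) b n) = U b n / 2 * (1 / ((G * R) b n)) := by
      ring
    rw [r1, r2]
    linarith [e1, e2, e3]
  -- reorder the triple sum
  have step2 : (∑ n, ∑ b, ∑ k, ((F:ℝ) * (R k n / ((G * R) b n)) * (Gplus b k - G b k)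
        + (U b n / 2 * (G b k) ^ 2 * R k n / ((G * R) b n) ^ 2)
          * ((Gplus b k)⁻¹ - (G b k)⁻¹)))
      = ∑ b, ∑ k, ((F:ℝ) * A b k * (Gplus b k - G b k)
        + C b k * ((Gplus b k)⁻¹ - (G b k)⁻¹)) := by
    rw [Finset.sum_comm]
    refine Finset.sum_congr rfl fun b _ => ?_
    rw [Finset.sum_comm]
    refine Finset.sum_congr rfl fun k _ => ?_
    rw [Finset.sum_add_distrib]
    congr 1
    · simp only [hAdef]
      rw [Finset.mul_sum, Finset.sum_mul]
    · simp only [hCdef]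
      rw [Finset.sum_mul]
  rw [step2] at step1
  linarith [step1, step3]
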